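/- Let S be a finite index set, X_k (k ∈ S) be {0,1}-valued random variables, and E_S ⊆ S × S a symmetric set of pairs (a 'conflict' graph on S). Let K be the independence number of the random induced subgraph on the active set {k : X_k = 1}, K' = Σ_{k∈S} X_k the total number of active vertices, and K^p = (1/2)·Σ_{(k₁,k₂)∈E_S, k₁≠k₂} E[X_{k₁} X_{k₂}] the expected number of conflicting active pairs. Then E[K'] / (1 + 2 E[K^p]/E[K']) ≤ E[K] ≤ E[K'], i.e. E[K] ≥ E[K']² / (E[K'] + 2 E[K^p]). -/

import Mathlib

open MeasureTheory

/-- The independence number of the subgraph of `G` induced on the active set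
`{k | X k ω = 1}`: the largest size of a set of pairwise non-adjacent active
vertices. -/
noncomputable def activeIndepNum {S Ω : Type*} [Fintype S]
    (G : SimpleGraph S) (X : S → Ω → ℝ) (ω : Ω) : ℕ :=
  sSup {n | ∃ s : Finset S, s.card = n ∧ (∀ k ∈ s, X k ω = 1) ∧
    (↑s : Set S).Pairwise (fun k₁ k₂ => ¬ G.Adj k₁ k₂)}

section Aux
open Finset

lemma caroWei {S : Type*} [Fintype S] (G : SimpleGraph S) [DecidableRel G.Adj] :
    ∀ s : Finset S, ∃ t : Finset S, t ⊆ s ∧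
      (↑t : Set S).Pairwise (fun k₁ k₂ => ¬ G.Adj k₁ k₂) ∧
      ∑ v ∈ s, (1 : ℝ) / (1 + (s.filter (G.Adj v)).card) ≤ t.card := by
  classical
  intro s
  induction s using Finset.strongInduction with
  | _ s ih =>
    rcases s.eq_empty_or_nonempty with rfl | hne
    · exact ⟨∅, by simp⟩
    obtain ⟨v, hv, hvmin⟩ := s.exists_min_image (fun u => (s.filter (G.Adj u)).card) hne
    set N : Finset S := insert v (s.filter (G.Adj v)) with hN
    set s' : Finset S := s \ N with hs'
    have hvN : v ∈ N := mem_insert_self _ _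
    have hss : s' ⊂ s := by
      refine Finset.ssubset_iff_of_subset (sdiff_subset) |>.mpr ⟨v, hv, by simp [hs', hvN]⟩
    obtain ⟨t', ht's, ht'pw, ht'sum⟩ := ih s' hss
    have hvt' : v ∉ t' := fun h => by
      have := ht's h; rw [hs', mem_sdiff] at this; exact this.2 hvN
    refine ⟨insert v t', ?_, ?_, ?_⟩
    · exact insert_subset hv (ht's.trans (sdiff_subset.trans le_rfl))
    · rw [coe_insert]
      haveI : Std.Symm (fun k₁ k₂ => ¬ G.Adj k₁ k₂) := ⟨fun a b (h : ¬ G.Adj a b) (hb : G.Adj b a) => h (G.adj_symm hb)⟩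
      refine (Set.pairwise_insert_of_symm).mpr
        ⟨ht'pw, fun u hu _ hadj => ?_⟩
      have hus' : u ∈ s' := ht's hu
      rw [hs', mem_sdiff] at hus'
      exact hus'.2 (mem_insert_of_mem (mem_filter.mpr ⟨hus'.1, hadj⟩))
    · rw [card_insert_of_notMem hvt']
      push_cast
      -- split the sum over s into s' and s ∩ N
      have hsplit : ∑ u ∈ s, (1 : ℝ) / (1 + (s.filter (G.Adj u)).card)
          = ∑ u ∈ s.filter (· ∈ N), (1 : ℝ) / (1 + (s.filter (G.Adj u)).card)
            + ∑ u ∈ s', (1 : ℝ) / (1 + (s.filter (G.Adj u)).card) := by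
        rw [hs', Finset.sdiff_eq_filter, ← Finset.sum_filter_add_sum_filter_not s (· ∈ N)]
      rw [hsplit]
      have h1 : ∑ u ∈ s.filter (· ∈ N), (1 : ℝ) / (1 + (s.filter (G.Adj u)).card) ≤ 1 := by
        have hb : ∀ u ∈ s.filter (· ∈ N), (1 : ℝ) / (1 + (s.filter (G.Adj u)).card)
            ≤ 1 / (1 + (s.filter (G.Adj v)).card) := by
          intro u hu
          rw [mem_filter] at hu
          exact one_div_le_one_div_of_le (by positivity)
            (by exact_mod_cast add_le_add_right (Nat.cast_le.mpr (hvmin u hu.1)) 1)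
        calc ∑ u ∈ s.filter (· ∈ N), (1 : ℝ) / (1 + (s.filter (G.Adj u)).card)
            ≤ (s.filter (· ∈ N)).card • ((1:ℝ) / (1 + (s.filter (G.Adj v)).card)) :=
              Finset.sum_le_card_nsmul _ _ _ hb
          _ ≤ (N.card : ℝ) * (1 / (1 + (s.filter (G.Adj v)).card)) := by
              rw [nsmul_eq_mul]
              refine mul_le_mul_of_nonneg_right ?_ (by positivity)
              exact_mod_cast Finset.card_le_card (fun x hx => (Finset.mem_filter.mp hx).2)
          _ ≤ 1 := by
              have hNc : (N.card : ℝ) ≤ 1 + (s.filter (G.Adj v)).card := by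
                rw [hN]
                exact_mod_cast (Finset.card_insert_le _ _).trans (by omega)
              rw [mul_one_div, div_le_one (by positivity)]
              linarith
      have h2 : ∑ u ∈ s', (1 : ℝ) / (1 + (s.filter (G.Adj u)).card)
          ≤ ∑ u ∈ s', (1 : ℝ) / (1 + (s'.filter (G.Adj u)).card) := by
        refine Finset.sum_le_sum fun u hu => ?_
        refine one_div_le_one_div_of_le (by positivity) ?_
        have : (s'.filter (G.Adj u)).card ≤ (s.filter (G.Adj u)).card :=
          Finset.card_le_card (Finset.filter_subset_filter _ (by rw [hs']; exact sdiff_subset))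
        exact_mod_cast add_le_add_right (Nat.cast_le.mpr this) 1
      linarith

lemma indep_bound {S : Type*} [Fintype S] (G : SimpleGraph S) [DecidableRel G.Adj]
    (s : Finset S) :
    ∃ t : Finset S, t ⊆ s ∧
      (↑t : Set S).Pairwise (fun k₁ k₂ => ¬ G.Adj k₁ k₂) ∧
      (s.card : ℝ) ^ 2 ≤ t.card *
        ((s.card : ℝ) + ∑ v ∈ s, ((s.filter (G.Adj v)).card : ℝ)) := by
  obtain ⟨t, hts, hpw, hsum⟩ := caroWei G s
  refine ⟨t, hts, hpw, ?_⟩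
  set d : S → ℝ := fun v => ((s.filter (G.Adj v)).card : ℝ) with hd
  have hdpos : ∀ v, (0:ℝ) < 1 + d v := fun v => by positivity
  have titu : (s.card : ℝ) ^ 2 ≤
      (∑ v ∈ s, 1 / (1 + d v)) * (∑ v ∈ s, (1 + d v)) := by
    have := Finset.sum_mul_sq_le_sq_mul_sq s
      (fun v => Real.sqrt (1 / (1 + d v))) (fun v => Real.sqrt (1 + d v))
    have h1 : ∀ v, Real.sqrt (1 / (1 + d v)) * Real.sqrt (1 + d v) = 1 := by
      intro v
      rw [← Real.sqrt_mul (by positivity), one_div_mul_cancel (hdpos v).ne', Real.sqrt_one]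
    have h2 : ∀ v, Real.sqrt (1 / (1 + d v)) ^ 2 = 1 / (1 + d v) := fun v =>
      Real.sq_sqrt (by positivity)
    have h3 : ∀ v, Real.sqrt (1 + d v) ^ 2 = 1 + d v := fun v =>
      Real.sq_sqrt (le_of_lt (hdpos v))
    simp only [h1, h2, h3, Finset.sum_const, nsmul_eq_mul, mul_one] at this
    simpa using this
  have hnn : (0:ℝ) ≤ ∑ v ∈ s, (1 + d v) :=
    Finset.sum_nonneg fun v _ => (hdpos v).le
  have hsum' : ∑ v ∈ s, (1 + d v) = (s.card : ℝ) + ∑ v ∈ s, d v := by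
    rw [Finset.sum_add_distrib, Finset.sum_const, nsmul_eq_mul, mul_one]
  calc (s.card : ℝ) ^ 2 ≤ (∑ v ∈ s, 1 / (1 + d v)) * (∑ v ∈ s, (1 + d v)) := titu
    _ ≤ t.card * (∑ v ∈ s, (1 + d v)) := mul_le_mul_of_nonneg_right hsum hnn
    _ = t.card * ((s.card : ℝ) + ∑ v ∈ s, d v) := by rw [hsum']

lemma pointwise_bounds {S Ω : Type*} [Fintype S] (G : SimpleGraph S) [DecidableRel G.Adj]
    (X : S → Ω → ℝ) (hX01 : ∀ k ω', X k ω' = 0 ∨ X k ω' = 1) (ω : Ω) :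
    (∑ k, X k ω) ^ 2 ≤ (activeIndepNum G X ω : ℝ) *
        ((∑ k, X k ω) + ∑ k₁, ∑ k₂ ∈ Finset.univ.filter (fun k₂ => G.Adj k₁ k₂),
          X k₁ ω * X k₂ ω) ∧
      (activeIndepNum G X ω : ℝ) ≤ ∑ k, X k ω := by
  classical
  set s : Finset S := Finset.univ.filter (fun k => X k ω = 1) with hs
  have hX : ∀ k, X k ω = if k ∈ s then (1:ℝ) else 0 := by
    intro k
    by_cases hk : k ∈ s
    · simp only [hk, if_true]; exact (Finset.mem_filter.mp hk).2
    · simp only [hk, if_false]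
      rcases hX01 k ω with h | h
      · exact h
      · exact absurd (Finset.mem_filter.mpr ⟨Finset.mem_univ k, h⟩) hk
  have ha : ∑ k, X k ω = (s.card : ℝ) := by
    simp_rw [hX]
    rw [Finset.sum_ite_mem, Finset.univ_inter, Finset.sum_const, nsmul_eq_mul, mul_one]
  have hb : (∑ k₁, ∑ k₂ ∈ Finset.univ.filter (fun k₂ => G.Adj k₁ k₂), X k₁ ω * X k₂ ω)
      = ∑ v ∈ s, ((s.filter (G.Adj v)).card : ℝ) := by
    have hinner : ∀ k₁ : S, ∑ k₂ ∈ Finset.univ.filter (fun k₂ => G.Adj k₁ k₂), X k₂ ω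
        = ((s.filter (G.Adj k₁)).card : ℝ) := by
      intro k₁
      simp_rw [hX]
      rw [Finset.sum_ite_mem, Finset.sum_const, nsmul_eq_mul, mul_one]
      congr 2
      ext x
      simp only [Finset.mem_inter, Finset.mem_filter, Finset.mem_univ, true_and, hs]
      tauto
    calc ∑ k₁, ∑ k₂ ∈ Finset.univ.filter (fun k₂ => G.Adj k₁ k₂), X k₁ ω * X k₂ ω
        = ∑ k₁, X k₁ ω * ((s.filter (G.Adj k₁)).card : ℝ) := by
          refine Finset.sum_congr rfl fun k₁ _ => ?_
          rw [← Finset.mul_sum, hinner]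
      _ = ∑ v ∈ s, ((s.filter (G.Adj v)).card : ℝ) := by
          simp_rw [hX, ite_mul, one_mul, zero_mul]
          rw [Finset.sum_ite_mem, Finset.univ_inter]
  have hSetNe : (0 : ℕ) ∈ {n | ∃ t : Finset S, t.card = n ∧ (∀ k ∈ t, X k ω = 1) ∧
      (↑t : Set S).Pairwise (fun k₁ k₂ => ¬ G.Adj k₁ k₂)} :=
    ⟨∅, by simp⟩
  have hBdd : BddAbove {n | ∃ t : Finset S, t.card = n ∧ (∀ k ∈ t, X k ω = 1) ∧
      (↑t : Set S).Pairwise (fun k₁ k₂ => ¬ G.Adj k₁ k₂)} := by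
    refine ⟨Fintype.card S, fun n hn => ?_⟩
    obtain ⟨t, ht, -, -⟩ := hn
    exact ht ▸ t.card_le_univ
  constructor
  · obtain ⟨t, hts, hpw, hb2⟩ := indep_bound G s
    have hmem : t.card ∈ {n | ∃ t : Finset S, t.card = n ∧ (∀ k ∈ t, X k ω = 1) ∧
        (↑t : Set S).Pairwise (fun k₁ k₂ => ¬ G.Adj k₁ k₂)} :=
      ⟨t, rfl, fun k hk => (Finset.mem_filter.mp (hts hk)).2, hpw⟩
    have hle : t.card ≤ activeIndepNum G X ω := le_csSup hBdd hmem
    have hnn : (0:ℝ) ≤ (s.card : ℝ) + ∑ v ∈ s, ((s.filter (G.Adj v)).card : ℝ) := by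
      exact add_nonneg (Nat.cast_nonneg _) (Finset.sum_nonneg fun v _ => Nat.cast_nonneg _)
    rw [ha, hb]
    calc ((s.card : ℝ)) ^ 2
        ≤ t.card * ((s.card : ℝ) + ∑ v ∈ s, ((s.filter (G.Adj v)).card : ℝ)) := hb2
      _ ≤ (activeIndepNum G X ω : ℝ) *
          ((s.card : ℝ) + ∑ v ∈ s, ((s.filter (G.Adj v)).card : ℝ)) :=
          mul_le_mul_of_nonneg_right (by exact_mod_cast hle) hnn
  · rw [ha]
    have : activeIndepNum G X ω ≤ s.card := by
      refine csSup_le ⟨0, hSetNe⟩ fun n hn => ?_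
      obtain ⟨t, ht, hact, -⟩ := hn
      refine ht ▸ Finset.card_le_card fun k hk => Finset.mem_filter.mpr
        ⟨Finset.mem_univ k, hact k hk⟩
    exact_mod_cast this

lemma measurable_activeIndepNum {S Ω : Type*} [Fintype S] [MeasurableSpace Ω]
    (G : SimpleGraph S) (X : S → Ω → ℝ) (hX_meas : ∀ k, Measurable (X k)) :
    Measurable (fun ω => (activeIndepNum G X ω : ℝ)) := by
  classical
  letI : MeasurableSpace (Finset S) := ⊤
  let A : Ω → Finset S := fun ω => Finset.univ.filter (fun k => X k ω = 1)
  have hA : Measurable A := by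
    refine measurable_to_countable fun ω => ?_
    have : A ⁻¹' {A ω} = ⋂ k : S,
        (if k ∈ A ω then X k ⁻¹' {1} else (X k ⁻¹' {1})ᶜ) := by
      ext ω'
      simp only [Set.mem_preimage, Set.mem_singleton_iff, Set.mem_iInter]
      constructor
      · intro h k
        by_cases hk : k ∈ A ω <;> simp only [hk, if_true, if_false]
        · have : k ∈ A ω' := h ▸ hk
          simpa [A, Finset.mem_filter] using this
        · intro hmem
          exact hk (h ▸ (by simpa [A, Finset.mem_filter] using hmem : k ∈ A ω'))
      · intro h
        ext k
        have := h k
        by_cases hk : k ∈ A ω <;> simp only [hk, if_true, if_false] at this <;>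
          simp [A, Finset.mem_filter, hk]
        · exact this
        · exact fun hc => this hc
    rw [this]
    refine MeasurableSet.iInter fun k => ?_
    by_cases hk : k ∈ A ω <;> simp only [hk, if_true, if_false]
    · exact hX_meas k (measurableSet_singleton 1)
    · exact (hX_meas k (measurableSet_singleton 1)).compl
  have hrepr : (fun ω => (activeIndepNum G X ω : ℝ)) =
      (fun t : Finset S => ((sSup {n | ∃ u : Finset S, u.card = n ∧ u ⊆ t ∧
        (↑u : Set S).Pairwise (fun k₁ k₂ => ¬ G.Adj k₁ k₂)} : ℕ) : ℝ)) ∘ A := by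
    funext ω
    simp only [Function.comp_apply, activeIndepNum, Nat.cast_inj]
    congr 1
    ext n
    constructor
    · rintro ⟨u, hc, hact, hpw⟩
      exact ⟨u, hc, fun k hk => Finset.mem_filter.mpr ⟨Finset.mem_univ k, hact k hk⟩, hpw⟩
    · rintro ⟨u, hc, hsub, hpw⟩
      exact ⟨u, hc, fun k hk => (Finset.mem_filter.mp (hsub hk)).2, hpw⟩
  rw [hrepr]
  exact (measurable_from_top).comp hA

end Aux


/-- for 0/1-valued activations `X` on a conflict graph `G`, with
`K` the independence number of the random induced subgraph on the active set,
`K' = Σ_k X_k`, and `K^p` the expected number of conflicting active pairs,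
`E[K']² / (E[K'] + 2 E[K^p]) ≤ E[K] ≤ E[K']`. -/
theorem expected_independence_number_bounds
    {S Ω : Type*} [Fintype S] [MeasurableSpace Ω]
    (μ : Measure Ω) [IsProbabilityMeasure μ]
    (G : SimpleGraph S) [DecidableRel G.Adj]
    (X : S → Ω → ℝ) (hX_meas : ∀ k, Measurable (X k))
    (hX01 : ∀ k ω, X k ω = 0 ∨ X k ω = 1)
    (K : Ω → ℕ) (hK : ∀ ω, K ω = activeIndepNum G X ω)
    (K' : Ω → ℝ) (hK' : ∀ ω, K' ω = ∑ k, X k ω)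
    (Kp : ℝ)
    (hKp : Kp = (1/2) * ∑ k₁, ∑ k₂ ∈ Finset.univ.filter (fun k₂ => G.Adj k₁ k₂),
      ∫ ω, X k₁ ω * X k₂ ω ∂μ) :
    (∫ ω, K' ω ∂μ) ^ 2 / ((∫ ω, K' ω ∂μ) + 2 * Kp) ≤ ∫ ω, (K ω : ℝ) ∂μ ∧
      ∫ ω, (K ω : ℝ) ∂μ ≤ ∫ ω, K' ω ∂μ := by
  classical
  open MeasureTheory in
  have hXnn : ∀ k ω, 0 ≤ X k ω := fun k ω => by rcases hX01 k ω with h | h <;> rw [h] <;> norm_num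
  have hXle : ∀ k ω, X k ω ≤ 1 := fun k ω => by rcases hX01 k ω with h | h <;> rw [h] <;> norm_num
  set f : Ω → ℝ := fun ω => ∑ k₁, ∑ k₂ ∈ Finset.univ.filter (fun k₂ => G.Adj k₁ k₂),
      X k₁ ω * X k₂ ω with hf
  -- integrabilities
  have hIntprod : ∀ k₁ k₂ : S, Integrable (fun ω => X k₁ ω * X k₂ ω) μ := by
    intro k₁ k₂
    refine Integrable.mono' (integrable_const 1)
      ((hX_meas k₁).mul (hX_meas k₂)).aestronglyMeasurable (ae_of_all μ fun ω => ?_)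
    rw [Real.norm_eq_abs, abs_of_nonneg (mul_nonneg (hXnn _ _) (hXnn _ _))]
    exact mul_le_one₀ (hXle _ _) (hXnn _ _) (hXle _ _)
  have hIntX : ∀ k, Integrable (X k) μ := by
    intro k
    refine Integrable.mono' (integrable_const 1) (hX_meas k).aestronglyMeasurable
      (ae_of_all μ fun ω => ?_)
    rw [Real.norm_eq_abs, abs_of_nonneg (hXnn _ _)]; exact hXle _ _
  have hIntK' : Integrable K' μ := by
    have : K' = fun ω => ∑ k, X k ω := funext hK'
    rw [this]
    exact integrable_finset_sum _ fun k _ => hIntX k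
  have hIntf : Integrable f μ := by
    refine integrable_finset_sum _ fun k₁ _ => integrable_finset_sum _ fun k₂ _ => hIntprod k₁ k₂
  -- pointwise bounds
  have hpt : ∀ ω, (K' ω) ^ 2 ≤ (K ω : ℝ) * (K' ω + f ω) := by
    intro ω
    have := (pointwise_bounds G X hX01 ω).1
    rw [hK ω, hK' ω]
    exact this
  have hle : ∀ ω, (K ω : ℝ) ≤ K' ω := by
    intro ω
    have := (pointwise_bounds G X hX01 ω).2
    rw [hK ω, hK' ω]
    exact this
  have hK'nn : ∀ ω, 0 ≤ K' ω := fun ω => by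
    rw [hK' ω]; exact Finset.sum_nonneg fun k _ => hXnn k ω
  have hfnn : ∀ ω, 0 ≤ f ω := fun ω =>
    Finset.sum_nonneg fun k₁ _ => Finset.sum_nonneg fun k₂ _ =>
      mul_nonneg (hXnn _ _) (hXnn _ _)
  have hK'card : ∀ ω, K' ω ≤ (Fintype.card S : ℝ) := fun ω => by
    rw [hK' ω]
    calc ∑ k, X k ω ≤ ∑ _k : S, (1:ℝ) := Finset.sum_le_sum fun k _ => hXle k ω
      _ = (Fintype.card S : ℝ) := by simp
  have hIntK : Integrable (fun ω => (K ω : ℝ)) μ := by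
    have hmeas : Measurable (fun ω => (K ω : ℝ)) := by
      have : (fun ω => (K ω : ℝ)) = fun ω => (activeIndepNum G X ω : ℝ) := by
        funext ω; rw [hK ω]
      rw [this]
      exact measurable_activeIndepNum G X hX_meas
    refine Integrable.mono' (integrable_const (Fintype.card S : ℝ))
      hmeas.aestronglyMeasurable (ae_of_all μ fun ω => ?_)
    rw [Real.norm_eq_abs, abs_of_nonneg (by positivity)]
    exact (hle ω).trans (hK'card ω)
  -- integral of f
  have hIf : ∫ ω, f ω ∂μ = 2 * Kp := by
    rw [hKp]
    have : ∫ ω, f ω ∂μ = ∑ k₁, ∑ k₂ ∈ Finset.univ.filter (fun k₂ => G.Adj k₁ k₂),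
        ∫ ω, X k₁ ω * X k₂ ω ∂μ := by
      rw [hf]
      rw [integral_finset_sum _ fun k₁ _ => integrable_finset_sum _ fun k₂ _ => hIntprod k₁ k₂]
      exact Finset.sum_congr rfl fun k₁ _ =>
        integral_finset_sum _ fun k₂ _ => hIntprod k₁ k₂
    rw [this]; ring
  set E' := ∫ ω, K' ω ∂μ with hE'
  set EK := ∫ ω, (K ω : ℝ) ∂μ with hEK
  have hE'nn : 0 ≤ E' := integral_nonneg hK'nn
  have hEKnn : 0 ≤ EK := integral_nonneg fun ω => Nat.cast_nonneg _
  have hKpnn : 0 ≤ Kp := by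
    rw [hKp]
    refine mul_nonneg (by norm_num) (Finset.sum_nonneg fun k₁ _ =>
      Finset.sum_nonneg fun k₂ _ =>
        integral_nonneg fun ω => mul_nonneg (hXnn _ _) (hXnn _ _))
  -- second conjunct
  have hupper : EK ≤ E' := integral_mono hIntK hIntK' hle
  refine ⟨?_, hupper⟩
  -- key inequality via AM-GM parameter t
  have key : ∀ t : ℝ, 0 < t → 2 * t * E' ≤ t ^ 2 * EK + (E' + 2 * Kp) := by
    intro t ht
    have hptw : ∀ ω, 2 * t * K' ω ≤ t ^ 2 * (K ω : ℝ) + (K' ω + f ω) := by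
      intro ω
      by_cases hb : K' ω + f ω = 0
      · have h1 : K' ω = 0 := by have := hK'nn ω; have := hfnn ω; linarith
        have h2 : f ω = 0 := by have := hK'nn ω; have := hfnn ω; linarith
        rw [h1, h2]
        have : (0:ℝ) ≤ t ^ 2 * (K ω : ℝ) := by positivity
        linarith
      · have hbpos : 0 < K' ω + f ω :=
          lt_of_le_of_ne (by have := hK'nn ω; have := hfnn ω; linarith) (Ne.symm hb)
        nlinarith [hpt ω, sq_nonneg ((K' ω + f ω) - t * K' ω),
          mul_le_mul_of_nonneg_left (hpt ω) (sq_nonneg t), hK'nn ω, hfnn ω,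
          (by positivity : (0:ℝ) ≤ (K ω : ℝ))]
    have hIR1 : Integrable (fun ω => K' ω + f ω) μ := by
      have := hIntK'.add hIntf
      simpa [Pi.add_def] using this
    have hint : ∫ ω, 2 * t * K' ω ∂μ ≤ ∫ ω, (t ^ 2 * (K ω : ℝ) + (K' ω + f ω)) ∂μ := by
      refine integral_mono ?_ ?_ hptw
      · exact hIntK'.const_mul _
      · have := (hIntK.const_mul (t ^ 2)).add hIR1
        simpa [Pi.add_def] using this
    rw [integral_const_mul] at hint
    have hR : ∫ ω, (t ^ 2 * (K ω : ℝ) + (K' ω + f ω)) ∂μ = t ^ 2 * EK + (E' + 2 * Kp) := by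
      rw [integral_add (hIntK.const_mul (t ^ 2)) hIR1, integral_add hIntK' hIntf,
        integral_const_mul, hIf]
    rw [hR] at hint
    exact hint
  have main : E' ^ 2 ≤ EK * (E' + 2 * Kp) := by
    by_cases hE0 : E' = 0
    · rw [hE0]
      have : (0:ℝ) ≤ EK * (0 + 2 * Kp) := by positivity
      simpa using this
    · have hE'pos : 0 < E' := lt_of_le_of_ne hE'nn (Ne.symm hE0)
      rcases eq_or_lt_of_le hEKnn with h0 | hEKpos
      · exfalso
        set t₀ := (E' + 2 * Kp) / (2 * E') + 1 with ht₀
        have ht₀pos : 0 < t₀ := by positivity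
        have hk := key t₀ ht₀pos
        rw [← h0] at hk
        have ht₀e : 2 * t₀ * E' = (E' + 2 * Kp) + 2 * E' := by
          rw [ht₀]; field_simp
        rw [ht₀e] at hk
        simp only [mul_zero, zero_add] at hk
        linarith
      · have hk := key (E' / EK) (div_pos hE'pos hEKpos)
        have e1 : 2 * (E' / EK) * E' = 2 * (E' ^ 2 / EK) := by ring
        have e2 : (E' / EK) ^ 2 * EK = E' ^ 2 / EK := by
          field_simp
        rw [e1, e2] at hk
        have h3 : E' ^ 2 / EK ≤ E' + 2 * Kp := by linarith
        calc E' ^ 2 = (E' ^ 2 / EK) * EK := by field_simp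
          _ ≤ (E' + 2 * Kp) * EK := mul_le_mul_of_nonneg_right h3 hEKnn
          _ = EK * (E' + 2 * Kp) := mul_comm _ _
  have hDnn : 0 ≤ E' + 2 * Kp := by linarith
  rcases eq_or_lt_of_le hDnn with hD0 | hDpos
  · rw [← hD0, div_zero]
    exact hEKnn
  · exact (div_le_iff₀ hDpos).mpr main
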